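/- Let G be a finite group of order 56 with a normal subgroup E that is elementary abelian of order 8, such that some (equivalently, every) element of order 7 in G acts by conjugation on E fixing no nonidentity element (so G is a Frobenius group of shape 2³:7). Then every faithful irreducible finite-dimensional complex representation of G has dimension 7, and its restriction to a subgroup of order 7 of G is isomorphic to the regular representation of the cyclic group of order 7; in particular each element of order 7 of G acts in such a representation with a nonzero fixed vector. -/

import Mathlib

open Pointwise


/-- Let `G` be a Frobenius group of order `56` of shape `2³:7`: it has a normal elementary
abelian subgroup `E` of order `8` on which some element of order `7` acts by conjugation
fixing no nonidentity element. Then every faithful irreducible finite-dimensional complex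
representation of `G` has dimension `7`, its restriction to any subgroup of order `7` is
isomorphic to the regular representation of the cyclic group of order `7`, and in particular
every element of order `7` of `G` acts with a nonzero fixed vector. -/

lemma fact56 : (56 : ℕ).factorization 7 = 1 := by
  have : (56:ℕ) = 7^1 * 8 := by norm_num
  rw [this, Nat.factorization_mul (by norm_num) (by norm_num)]
  rw [Nat.Prime.factorization_pow (by norm_num)]
  rw [Finsupp.add_apply, Nat.factorization_eq_zero_of_not_dvd (by norm_num)]
  simp

lemma free_all (G : Type) [Group G] [Finite G] (hG : Nat.card G = 56)
    (E : Subgroup G) [E.Normal]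
    (hfree : ∃ g : G, orderOf g = 7 ∧ ∀ x ∈ E, x ≠ 1 → g * x * g⁻¹ ≠ x) :
    ∀ g : G, orderOf g = 7 → ∀ x ∈ E, x ≠ 1 → g * x * g⁻¹ ≠ x := by
  obtain ⟨g₀, hg₀, hfree₀⟩ := hfree
  intro g hg x hxE hx1 hfix
  haveI : Fact (Nat.Prime 7) := ⟨by norm_num⟩
  have cardP : Nat.card (Subgroup.zpowers g) = 7 ^ (Nat.card G).factorization 7 := by
    rw [Nat.card_zpowers, hg, hG, fact56, pow_one]
  have cardP₀ : Nat.card (Subgroup.zpowers g₀) = 7 ^ (Nat.card G).factorization 7 := by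
    rw [Nat.card_zpowers, hg₀, hG, fact56, pow_one]
  set P : Sylow 7 G := Sylow.ofCard (Subgroup.zpowers g) cardP
  set P₀ : Sylow 7 G := Sylow.ofCard (Subgroup.zpowers g₀) cardP₀
  obtain ⟨h, hh⟩ := MulAction.exists_smul_eq G P₀ P
  have hgP : g ∈ (P : Subgroup G) := Subgroup.mem_zpowers g
  rw [← hh] at hgP
  have hgP' : g ∈ MulAut.conj h • (P₀ : Subgroup G) := by
    have e : ((h • P₀ : Sylow 7 G) : Subgroup G) = MulAut.conj h • (P₀ : Subgroup G) := by
      rw [Sylow.smul_def, Sylow.pointwise_smul_def]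
    rwa [e] at hgP
  rw [Subgroup.mem_pointwise_smul_iff_inv_smul_mem] at hgP'
  have hconj : (MulAut.conj h)⁻¹ • g = h⁻¹ * g * h := by
    simp [MulAut.smul_def]
  rw [hconj] at hgP'
  obtain ⟨k, hk'⟩ := hgP'
  have hk : g₀ ^ k = h⁻¹ * g * h := hk'
  -- g₀ ^ k = h⁻¹ * g * h
  set y : G := h⁻¹ * x * h with hy
  have hyE : y ∈ E := by
    have := Subgroup.Normal.conj_mem ‹E.Normal› x hxE h⁻¹
    simpa [hy] using this
  have hy1 : y ≠ 1 := by
    intro hy1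
    apply hx1
    have : x = h * y * h⁻¹ := by rw [hy]; group
    rw [this, hy1]; group
  -- g₀ ^ k fixes y
  have hfixy : (g₀ ^ k) * y * (g₀ ^ k)⁻¹ = y := by
    rw [hk, hy]
    have e1 : h⁻¹ * g * h * (h⁻¹ * x * h) * (h⁻¹ * g * h)⁻¹ = h⁻¹ * (g * x * g⁻¹) * h := by
      group
    rw [e1, hfix]
  -- order of g₀ ^ k is 7
  have hordk : orderOf (g₀ ^ k) = 7 := by
    rw [hk]
    have := orderOf_injective (MulAut.conj h⁻¹).toMonoidHom (MulEquiv.injective _) g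
    simpa [MulAut.conj_apply] using this.trans hg
  -- zpowers (g₀ ^ k) = zpowers g₀
  have hle : Subgroup.zpowers (g₀ ^ k) ≤ Subgroup.zpowers g₀ :=
    Subgroup.zpowers_le.mpr (Subgroup.zpow_mem _ (Subgroup.mem_zpowers g₀) k)
  have heq : Subgroup.zpowers (g₀ ^ k) = Subgroup.zpowers g₀ := by
    apply Subgroup.eq_of_le_of_card_ge hle
    rw [Nat.card_zpowers, Nat.card_zpowers, hordk, hg₀]
  have hg₀mem : g₀ ∈ Subgroup.zpowers (g₀ ^ k) := heq ▸ Subgroup.mem_zpowers g₀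
  -- centralizer argument
  have hcen : g₀ ^ k ∈ Subgroup.centralizer {y} := by
    rw [Subgroup.mem_centralizer_iff]
    intro z hz
    rw [Set.mem_singleton_iff] at hz
    subst hz
    have := hfixy
    calc y * g₀ ^ k = (g₀ ^ k * y * (g₀ ^ k)⁻¹) * g₀ ^ k := by rw [hfixy]
    _ = g₀ ^ k * y := by group
  have hg₀cen : g₀ ∈ Subgroup.centralizer {y} := by
    have : Subgroup.zpowers (g₀ ^ k) ≤ Subgroup.centralizer {y} :=
      Subgroup.zpowers_le.mpr hcen
    exact this hg₀mem
  rw [Subgroup.mem_centralizer_iff] at hg₀cen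
  have := hg₀cen y (Set.mem_singleton y)
  exact hfree₀ y hyE hy1 (by rw [← this]; group)

lemma simul_eig (G : Type) [Group G] [Finite G]
    (E : Subgroup G)
    (hE_sq : ∀ x ∈ E, x ^ 2 = 1)
    (hE_ab : ∀ x ∈ E, ∀ y ∈ E, x * y = y * x)
    (V : Type) [AddCommGroup V] [Module ℂ V] [FiniteDimensional ℂ V]
    (hV : Nontrivial V)
    (ρ : G →* (V →ₗ[ℂ] V)ˣ) :
    ∃ (c : E → ℂ) (v : V), v ≠ 0 ∧ ∀ x : E, (ρ (x : G) : V →ₗ[ℂ] V) v = c x • v := by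
  classical
  have key : ∀ s : Finset E, ∃ W : Submodule ℂ V, W ≠ ⊥ ∧
      (∀ x : E, ∀ w ∈ W, (ρ (x : G) : V →ₗ[ℂ] V) w ∈ W) ∧
      (∀ x ∈ s, ∃ μ : ℂ, ∀ w ∈ W, (ρ (x : G) : V →ₗ[ℂ] V) w = μ • w) := by
    intro s
    induction s using Finset.induction_on with
    | empty =>
      refine ⟨⊤, ?_, fun x w _ => trivial, fun x hx => absurd hx (by simp)⟩
      intro h
      obtain ⟨u, hu⟩ := exists_ne (0 : V)
      have : u ∈ (⊤ : Submodule ℂ V) := trivial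
      rw [h, Submodule.mem_bot] at this
      exact hu this
    | @insert y s hy ih =>
      obtain ⟨W, hW0, hWinv, hWeig⟩ := ih
      set L : V →ₗ[ℂ] V := (ρ (y : G) : V →ₗ[ℂ] V) with hL
      have hy2 : (y : G) * (y : G) = 1 := by
        have := hE_sq (y : G) y.2; rwa [pow_two] at this
      have hLL : ∀ w, L (L w) = w := by
        intro w
        have h2 : ρ (y : G) * ρ (y : G) = 1 := by rw [← map_mul, hy2, map_one]
        have h2' : L * L = 1 := by
          have := congrArg Units.val h2
          simpa [hL] using this
        calc L (L w) = (L * L) w := rfl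
        _ = w := by rw [h2']; rfl
      have hcomm : ∀ x : E, ∀ w, L ((ρ (x : G) : V →ₗ[ℂ] V) w)
          = (ρ (x : G) : V →ₗ[ℂ] V) (L w) := by
        intro x w
        have h2 : ρ (y : G) * ρ (x : G) = ρ (x : G) * ρ (y : G) := by
          rw [← map_mul, ← map_mul, hE_ab _ y.2 _ x.2]
        have := congrArg Units.val h2
        have := congrArg (fun (f : V →ₗ[ℂ] V) => f w) this
        simpa [hL] using this
      -- candidate subspaces
      have inv : ∀ μ : ℂ, ∀ x : E, ∀ w ∈ W ⊓ LinearMap.ker (L - μ • LinearMap.id),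
          (ρ (x : G) : V →ₗ[ℂ] V) w ∈ W ⊓ LinearMap.ker (L - μ • LinearMap.id) := by
        intro μ x w hw
        obtain ⟨hw1, hw2⟩ := Submodule.mem_inf.mp hw
        rw [LinearMap.mem_ker] at hw2
        rw [Submodule.mem_inf]
        refine ⟨hWinv x w hw1, ?_⟩
        rw [LinearMap.mem_ker]
        have hw2' : L w = μ • w := by
          have := hw2
          simp only [LinearMap.sub_apply, LinearMap.smul_apply, LinearMap.id_apply,
            sub_eq_zero] at this ⊢
          exact this
        simp only [LinearMap.sub_apply, LinearMap.smul_apply, LinearMap.id_apply, sub_eq_zero]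
        rw [hcomm x w, hw2', map_smul]
      have eig : ∀ μ : ℂ, ∀ w ∈ W ⊓ LinearMap.ker (L - μ • LinearMap.id), L w = μ • w := by
        intro μ w hw
        have := (Submodule.mem_inf.mp hw).2
        rw [LinearMap.mem_ker] at this
        simpa [LinearMap.sub_apply, sub_eq_zero] using this
      have hnonbot : (W ⊓ LinearMap.ker (L - (1:ℂ) • LinearMap.id) ≠ ⊥) ∨
          (W ⊓ LinearMap.ker (L - (-1:ℂ) • LinearMap.id) ≠ ⊥) := by
        by_contra hcon
        push_neg at hcon
        obtain ⟨h1, h2⟩ := hcon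
        apply hW0
        rw [eq_bot_iff]
        intro w hw
        have hLwW : L w ∈ W := hWinv y w hw
        have hu : L w - w ∈ W ⊓ LinearMap.ker (L - (-1:ℂ) • LinearMap.id) := by
          rw [Submodule.mem_inf]
          constructor
          · exact Submodule.sub_mem W hLwW hw
          · rw [LinearMap.mem_ker]
            simp only [LinearMap.sub_apply, LinearMap.smul_apply, LinearMap.id_apply]
            rw [map_sub, hLL w]
            module
        rw [h2, Submodule.mem_bot, sub_eq_zero] at hu
        have hw1 : w ∈ W ⊓ LinearMap.ker (L - (1:ℂ) • LinearMap.id) := by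
          rw [Submodule.mem_inf]
          refine ⟨hw, ?_⟩
          rw [LinearMap.mem_ker]
          simp only [LinearMap.sub_apply, LinearMap.smul_apply, LinearMap.id_apply, one_smul,
            sub_eq_zero]
          exact hu
        rw [h1, Submodule.mem_bot] at hw1
        simpa using hw1
      rcases hnonbot with hnb | hnb
      · refine ⟨W ⊓ LinearMap.ker (L - (1:ℂ) • LinearMap.id), hnb, inv 1, ?_⟩
        intro x hx
        rcases Finset.mem_insert.mp hx with hxy | hxs
        · subst hxy
          exact ⟨1, fun w hw => by simpa [hL] using eig 1 w hw⟩
        · obtain ⟨μ, hμ⟩ := hWeig x hxs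
          exact ⟨μ, fun w hw => hμ w (Submodule.mem_inf.mp hw).1⟩
      · refine ⟨W ⊓ LinearMap.ker (L - (-1:ℂ) • LinearMap.id), hnb, inv (-1), ?_⟩
        intro x hx
        rcases Finset.mem_insert.mp hx with hxy | hxs
        · subst hxy
          exact ⟨-1, fun w hw => by simpa [hL] using eig (-1) w hw⟩
        · obtain ⟨μ, hμ⟩ := hWeig x hxs
          exact ⟨μ, fun w hw => hμ w (Submodule.mem_inf.mp hw).1⟩
  haveI : Fintype E := Fintype.ofFinite _
  obtain ⟨W, hW0, _, hWeig⟩ := key Finset.univ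
  obtain ⟨v, hvW, hv0⟩ := Submodule.ne_bot_iff W |>.mp hW0
  refine ⟨fun x => Classical.choose (hWeig x (Finset.mem_univ x)), v, hv0, fun x => ?_⟩
  exact Classical.choose_spec (hWeig x (Finset.mem_univ x)) v hvW

lemma char_sum {H : Type*} [Group H] [Fintype H] (f : H → ℂ)
    (hmul : ∀ a b : H, f (a * b) = f a * f b) (hnt : ∃ y, f y ≠ 1) :
    ∑ x : H, f x = 0 := by
  obtain ⟨y, hy⟩ := hnt
  have h1 : ∑ x : H, f (y * x) = ∑ x : H, f x :=
    Fintype.sum_equiv (Equiv.mulLeft y) _ _ (fun x => rfl)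
  have h2 : ∑ x : H, f (y * x) = f y * ∑ x : H, f x := by
    rw [Finset.mul_sum]
    exact Finset.sum_congr rfl (fun x _ => hmul y x)
  have h3 : (f y - 1) * ∑ x : H, f x = 0 := by
    rw [sub_mul, one_mul, ← h2, h1, sub_self]
  rcases mul_eq_zero.mp h3 with h | h
  · exact absurd (by linear_combination h) hy
  · exact h

lemma main_basis (G : Type) [Group G] [Finite G] (hG : Nat.card G = 56)
    (E : Subgroup G) [E.Normal]
    (hE_card : Nat.card E = 8)
    (hE_sq : ∀ x ∈ E, x ^ 2 = 1)
    (hE_ab : ∀ x ∈ E, ∀ y ∈ E, x * y = y * x)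
    (V : Type) [AddCommGroup V] [Module ℂ V] [FiniteDimensional ℂ V]
    (hV : Nontrivial V)
    (ρ : G →* (V →ₗ[ℂ] V)ˣ)
    (hρ : Function.Injective ρ)
    (hirr : ∀ W : Submodule ℂ V, (∀ g : G, ∀ v ∈ W, (ρ g : V →ₗ[ℂ] V) v ∈ W) →
      W = ⊥ ∨ W = ⊤)
    (g : G) (hg : orderOf g = 7)
    (hfreeall : ∀ g' : G, orderOf g' = 7 → ∀ x ∈ E, x ≠ 1 → g' * x * g'⁻¹ ≠ x) :
    ∃ b : Module.Basis (ZMod 7) ℂ V, ∀ i, (ρ g : V →ₗ[ℂ] V) (b i) = b (i + 1) := by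
  classical
  haveI : Fintype E := Fintype.ofFinite _
  obtain ⟨c, v, hv0, hc⟩ := simul_eig G E hE_sq hE_ab V hV ρ
  -- basic facts about c
  have hcomp : ∀ (h₁ h₂ : G) (w : V),
      (ρ h₁ : V →ₗ[ℂ] V) ((ρ h₂ : V →ₗ[ℂ] V) w) = (ρ (h₁ * h₂) : V →ₗ[ℂ] V) w := by
    intro h₁ h₂ w
    rw [map_mul, Units.val_mul]
    rfl
  have hveq : ∀ (a b : ℂ), a • v = b • v → a = b := by
    intro a b hab
    have h : (a - b) • v = 0 := by rw [sub_smul, hab, sub_self]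
    rcases smul_eq_zero.mp h with h | h
    · exact sub_eq_zero.mp h
    · exact absurd h hv0
  have hcmul : ∀ x y : E, c (x * y) = c x * c y := by
    intro x y
    apply hveq
    rw [← hc (x * y)]
    have : ((x * y : E) : G) = (x : G) * (y : G) := rfl
    rw [this, ← hcomp, hc y, map_smul, hc x, smul_smul, mul_comm (c x) (c y)]
  have hc1 : c 1 = 1 := by
    apply hveq
    rw [← hc 1]
    simp
  have hcsq : ∀ x : E, c x * c x = 1 := by
    intro x
    have hxx : x * x = 1 := by
      ext
      have := hE_sq (x : G) x.2
      rwa [pow_two] at this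
    rw [← hcmul, hxx, hc1]
  have hcne : ∀ x : E, c x ≠ 0 := by
    intro x h
    have := hcsq x
    rw [h, mul_zero] at this
    exact zero_ne_one this
  have hcinv : ∀ x : E, c x⁻¹ = c x := by
    intro x
    have h1 : c x⁻¹ * c x = 1 := by rw [← hcmul, inv_mul_cancel, hc1]
    calc c x⁻¹ = c x⁻¹ * (c x * c x) := by rw [hcsq x, mul_one]
    _ = (c x⁻¹ * c x) * c x := by ring
    _ = c x := by rw [h1, one_mul]
  -- c is nontrivial
  have hcnt : ∃ x : E, c x ≠ 1 := by
    by_contra hcon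
    push_neg at hcon
    set F : Submodule ℂ V :=
      { carrier := {w | ∀ x : E, (ρ (x : G) : V →ₗ[ℂ] V) w = w}
        add_mem' := by intro a b ha hb x; rw [map_add, ha x, hb x]
        zero_mem' := by intro x; rw [map_zero]
        smul_mem' := by intro r a ha x; rw [map_smul, ha x] } with hF
    have hmemF : ∀ w : V, w ∈ F ↔ ∀ x : E, (ρ (x : G) : V →ₗ[ℂ] V) w = w := fun w => Iff.rfl
    have hFinv : ∀ h : G, ∀ w ∈ F, (ρ h : V →ₗ[ℂ] V) w ∈ F := by
      intro h w hw
      rw [hmemF] at hw ⊢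
      intro x
      have hmem : h⁻¹ * (x : G) * h ∈ E := by
        have := Subgroup.Normal.conj_mem ‹E.Normal› (x : G) x.2 h⁻¹
        simpa using this
      have e1 : (ρ (x : G) : V →ₗ[ℂ] V) ((ρ h : V →ₗ[ℂ] V) w)
          = (ρ h : V →ₗ[ℂ] V) ((ρ (h⁻¹ * (x : G) * h) : V →ₗ[ℂ] V) w) := by
        rw [hcomp, hcomp]
        congr 2
        group
      rw [e1, hw ⟨h⁻¹ * (x : G) * h, hmem⟩]
    rcases hirr F hFinv with hbot | htop
    · have : v ∈ F := by
        rw [hmemF]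
        intro x
        rw [hc x, hcon x, one_smul]
      rw [hbot, Submodule.mem_bot] at this
      exact hv0 this
    · rcases Subgroup.bot_or_exists_ne_one E with hEbot | ⟨x₀, hx₀E, hx₀1⟩
      · rw [hEbot] at hE_card
        simp [Nat.card_eq_fintype_card] at hE_card
      · apply hx₀1
        apply hρ
        rw [map_one]
        ext w
        have hwF : w ∈ F := htop ▸ Submodule.mem_top
        rw [hmemF] at hwF
        exact (hwF ⟨x₀, hx₀E⟩).trans rfl
  -- the vectors
  have hg7 : g ^ (7 : ℕ) = 1 := by rw [← hg]; exact pow_orderOf_eq_one g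
  have hpow : ∀ a b : ℕ, a ≡ b [MOD 7] → g ^ a = g ^ b := by
    intro a b h
    rw [pow_eq_pow_iff_modEq, hg]
    exact h
  set vv : ZMod 7 → V := fun i => (ρ (g ^ (i.val)) : V →ₗ[ℂ] V) v with hvv
  have hshift : ∀ (n : ℕ) (i : ZMod 7),
      (ρ (g ^ n) : V →ₗ[ℂ] V) (vv i) = vv (i + (n : ZMod 7)) := by
    intro n i
    have hmod : g ^ (n + i.val) = g ^ ((i + (n : ZMod 7)).val) := by
      apply hpow
      have h1 : (i + (n : ZMod 7)).val = (i.val + (n : ZMod 7).val) % 7 := ZMod.val_add i n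
      have h2 : (n : ZMod 7).val = n % 7 := ZMod.val_natCast 7 (a := n)
      rw [h1, h2]
      unfold Nat.ModEq
      omega
    rw [hvv]
    simp only []
    rw [hcomp, ← pow_add, hmod]
  have hgshift : ∀ i, (ρ g : V →ₗ[ℂ] V) (vv i) = vv (i + 1) := by
    intro i
    have := hshift 1 i
    rwa [pow_one, Nat.cast_one] at this
  -- vv i nonzero
  have hunit : ∀ (h : G) (w : V), (ρ h : V →ₗ[ℂ] V) w = 0 → w = 0 := by
    intro h w hw
    have : (ρ h⁻¹ : V →ₗ[ℂ] V) ((ρ h : V →ₗ[ℂ] V) w) = w := by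
      rw [hcomp, inv_mul_cancel, map_one, Units.val_one, Module.End.one_apply]
    rw [hw, map_zero] at this
    exact this.symm
  have hvvne : ∀ i, vv i ≠ 0 := fun i h => hv0 (hunit _ _ h)
  -- conjugation characters
  have hconjmem : ∀ (h : G) (x : E), h⁻¹ * (x : G) * h ∈ E := by
    intro h x
    have := Subgroup.Normal.conj_mem ‹E.Normal› (x : G) x.2 h⁻¹
    simpa using this
  set τ : G → E → E := fun h x => ⟨h⁻¹ * (x : G) * h, hconjmem h x⟩ with hτ
  have hτmul : ∀ (h : G) (x y : E), τ h (x * y) = τ h x * τ h y := by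
    intro h x y
    ext
    show h⁻¹ * ((x : G) * (y : G)) * h = (h⁻¹ * (x : G) * h) * (h⁻¹ * (y : G) * h)
    group
  set cc : ZMod 7 → E → ℂ := fun i x => c (τ (g ^ i.val) x) with hcc
  have heig : ∀ (i : ZMod 7) (x : E), (ρ (x : G) : V →ₗ[ℂ] V) (vv i) = cc i x • vv i := by
    intro i x
    rw [hvv]
    simp only []
    rw [hcomp]
    have e1 : (x : G) * g ^ i.val = g ^ i.val * ((τ (g ^ i.val) x : E) : G) := by
      show (x : G) * g ^ i.val = g ^ i.val * ((g ^ i.val)⁻¹ * (x : G) * g ^ i.val)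
      group
    rw [e1, ← hcomp, hc (τ (g ^ i.val) x), map_smul]
  -- multiplicativity etc. of cc
  have hccmul : ∀ (i : ZMod 7) (x y : E), cc i (x * y) = cc i x * cc i y := by
    intro i x y
    rw [hcc]
    simp only []
    rw [hτmul, hcmul]
  have hccsq : ∀ (i : ZMod 7) (x : E), cc i x * cc i x = 1 := fun i x => hcsq _
  -- distinctness of characters
  have hccinj : ∀ i j : ZMod 7, i ≠ j → cc i ≠ cc j := by
    intro i j hij hceq
    set m := i.val with hm
    set n := j.val with hn
    have hmlt : m < 7 := i.val_lt
    have hnlt : n < 7 := j.val_lt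
    have hmn : m ≠ n := fun h => hij (ZMod.val_injective 7 h)
    set d : ℕ := 7 - n + m with hd
    have hnd7 : ¬ (7 ∣ d) := by omega
    have hcop : (orderOf g).Coprime d := by
      rw [hg]
      exact (Nat.Prime.coprime_iff_not_dvd (by norm_num)).mpr hnd7
    set u : G := g ^ d with hu
    have hord : orderOf u = 7 := by rw [hu, hcop.orderOf_pow, hg]
    have hufree : ∀ x ∈ E, x ≠ 1 → u * x * u⁻¹ ≠ x := hfreeall u hord
    -- the relation : c (u z u⁻¹) = c z for all z
    have huinv : (g ^ n)⁻¹ * g ^ m = u := by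
      rw [hu, hd]
      have : g ^ (7 - n + m) = (g ^ n)⁻¹ * (g ^ n * g ^ (7 - n + m)) := by group
      rw [this]
      congr 1
      rw [← pow_add]
      have : n + (7 - n + m) = 7 + m := by omega
      rw [this, pow_add, hg7, one_mul]
    set T : E → E := fun z => ⟨u * (z : G) * u⁻¹,
      Subgroup.Normal.conj_mem ‹E.Normal› (z : G) z.2 u⟩ with hT
    set σ : E → E := fun z => ⟨g ^ m * (z : G) * (g ^ m)⁻¹,
      Subgroup.Normal.conj_mem ‹E.Normal› (z : G) z.2 (g ^ m)⟩ with hσ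
    have hτσ : ∀ z : E, τ (g ^ m) (σ z) = z := by
      intro z
      ext
      show (g ^ m)⁻¹ * (g ^ m * (z : G) * (g ^ m)⁻¹) * g ^ m = (z : G)
      group
    have hτσ' : ∀ z : E, τ (g ^ n) (σ z) = T z := by
      intro z
      ext
      show (g ^ n)⁻¹ * (g ^ m * (z : G) * (g ^ m)⁻¹) * g ^ n = u * (z : G) * u⁻¹
      rw [← huinv]
      group
    have hrel : ∀ z : E, c (T z) = c z := by
      intro z
      have h1 := congrFun hceq (σ z)
      rw [hcc] at h1
      simp only [] at h1
      rw [hτσ, hτσ'] at h1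
      exact h1.symm
    have hTmul : ∀ z₁ z₂ : E, T (z₁ * z₂) = T z₁ * T z₂ := by
      intro z₁ z₂
      ext
      show u * ((z₁ : G) * (z₂ : G)) * u⁻¹ = (u * (z₁ : G) * u⁻¹) * (u * (z₂ : G) * u⁻¹)
      group
    have hTinv : ∀ z : E, T z⁻¹ = (T z)⁻¹ := by
      intro z
      ext
      show u * ((z : G))⁻¹ * u⁻¹ = (u * (z : G) * u⁻¹)⁻¹
      group
    have hTfix : ∀ z : E, T z = z → z = 1 := by
      intro z hz
      by_contra hz1
      apply hufree (z : G) z.2 (by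
        intro h
        exact hz1 (by ext; exact h))
      have := congrArg (Subtype.val) hz
      exact this
    set φ : E → E := fun z => T z * z⁻¹ with hφ
    have hφinj : Function.Injective φ := by
      intro z₁ z₂ h
      rw [hφ] at h
      simp only [] at h
      have h2 : T (z₂⁻¹ * z₁) = z₂⁻¹ * z₁ := by
        rw [hTmul, hTinv]
        -- from T z₁ * z₁⁻¹ = T z₂ * z₂⁻¹
        have : (T z₂)⁻¹ * T z₁ = z₂⁻¹ * z₁ := by
          have h3 := congrArg (fun w => (T z₂)⁻¹ * w * z₁) h
          calc (T z₂)⁻¹ * T z₁ = (T z₂)⁻¹ * (T z₁ * z₁⁻¹) * z₁ := by group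
          _ = (T z₂)⁻¹ * (T z₂ * z₂⁻¹) * z₁ := by rw [h]
          _ = z₂⁻¹ * z₁ := by group
        exact this
      have := hTfix _ h2
      have : z₂⁻¹ * z₁ = 1 := this
      calc z₁ = z₂ * (z₂⁻¹ * z₁) := by group
      _ = z₂ := by rw [this, mul_one]
    have hφsurj : Function.Surjective φ := Finite.surjective_of_injective hφinj
    obtain ⟨x, hx⟩ := hcnt
    obtain ⟨z, hz⟩ := hφsurj x
    apply hx
    rw [← hz, hφ]
    simp only []
    rw [hcmul, hrel, hcinv]
    exact hcsq z
  -- character orthogonality sums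
  have hcard8 : Fintype.card E = 8 := by rw [← Nat.card_eq_fintype_card, hE_card]
  have hsum : ∀ i j : ZMod 7, i ≠ j → ∑ x : E, cc i x * cc j x = 0 := by
    intro i j hij
    apply char_sum
    · intro a b
      rw [hccmul, hccmul]
      ring
    · have hne := hccinj i j hij
      have : ∃ x : E, cc i x ≠ cc j x := by
        by_contra hcon
        push_neg at hcon
        exact hne (funext hcon)
      obtain ⟨x, hx⟩ := this
      refine ⟨x, fun h => hx ?_⟩
      calc cc i x = cc i x * (cc j x * cc j x) := by rw [hccsq j x, mul_one]
      _ = (cc i x * cc j x) * cc j x := by ring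
      _ = cc j x := by rw [h, one_mul]
  have hsumself : ∀ i : ZMod 7, ∑ x : E, cc i x * cc i x = 8 := by
    intro i
    have h : ∑ x : E, cc i x * cc i x = ∑ _x : E, (1 : ℂ) :=
      Finset.sum_congr rfl (fun x _ => hccsq i x)
    rw [h, Finset.sum_const, Finset.card_univ, hcard8]
    norm_num
  -- linear independence
  have hli : LinearIndependent ℂ vv := by
    rw [Fintype.linearIndependent_iff]
    intro a ha i₀
    have h0 : ∑ x : E, cc i₀ x • (ρ (x : G) : V →ₗ[ℂ] V) (∑ j : ZMod 7, a j • vv j) = 0 := by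
      rw [ha]
      simp
    have h1 : ∑ x : E, cc i₀ x • (ρ (x : G) : V →ₗ[ℂ] V) (∑ j : ZMod 7, a j • vv j)
        = ∑ j : ZMod 7, (a j * ∑ x : E, cc i₀ x * cc j x) • vv j := by
      calc ∑ x : E, cc i₀ x • (ρ (x : G) : V →ₗ[ℂ] V) (∑ j : ZMod 7, a j • vv j)
          = ∑ x : E, ∑ j : ZMod 7, (cc i₀ x * (a j * cc j x)) • vv j := by
            refine Finset.sum_congr rfl (fun x _ => ?_)
            rw [map_sum, Finset.smul_sum]
            refine Finset.sum_congr rfl (fun j _ => ?_)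
            rw [map_smul, heig j x, smul_smul, smul_smul, mul_assoc]
        _ = ∑ j : ZMod 7, ∑ x : E, (cc i₀ x * (a j * cc j x)) • vv j := Finset.sum_comm
        _ = ∑ j : ZMod 7, (a j * ∑ x : E, cc i₀ x * cc j x) • vv j := by
            refine Finset.sum_congr rfl (fun j _ => ?_)
            rw [← Finset.sum_smul]
            congr 1
            rw [Finset.mul_sum]
            refine Finset.sum_congr rfl (fun x _ => ?_)
            ring
    have h2 : ∑ j : ZMod 7, (a j * ∑ x : E, cc i₀ x * cc j x) • vv j
        = (a i₀ * 8) • vv i₀ := by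
      rw [Finset.sum_eq_single i₀]
      · rw [hsumself i₀]
      · intro j _ hj
        rw [hsum i₀ j (Ne.symm hj), mul_zero, zero_smul]
      · intro h
        exact absurd (Finset.mem_univ i₀) h
    rw [h1, h2] at h0
    rcases smul_eq_zero.mp h0 with h | h
    · have : (8 : ℂ) ≠ 0 := by norm_num
      rcases mul_eq_zero.mp h with h' | h'
      · exact h'
      · exact absurd h' this
    · exact absurd h (hvvne i₀)
  -- span
  set U : Submodule ℂ V := Submodule.span ℂ (Set.range vv) with hU
  have hvvU : ∀ i, vv i ∈ U := fun i => Submodule.subset_span (Set.mem_range_self i)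
  have hmapgen : ∀ (h : G), (∀ i : ZMod 7, (ρ h : V →ₗ[ℂ] V) (vv i) ∈ U) →
      ∀ w ∈ U, (ρ h : V →ₗ[ℂ] V) w ∈ U := by
    intro h hh w hw
    have hle : Submodule.map (ρ h : V →ₗ[ℂ] V) U ≤ U := by
      rw [hU, Submodule.map_span]
      apply Submodule.span_le.mpr
      rintro _ ⟨_, ⟨i, rfl⟩, rfl⟩
      exact hh i
    exact hle ⟨w, hw, rfl⟩
  have hKtop : Subgroup.closure ((E : Set G) ∪ {g}) = ⊤ := by
    set K := Subgroup.closure ((E : Set G) ∪ {g}) with hK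
    have hEK : E ≤ K := fun x hx => Subgroup.subset_closure (Or.inl hx)
    have hgK : g ∈ K := Subgroup.subset_closure (Or.inr rfl)
    have h8 : (8 : ℕ) ∣ Nat.card K := hE_card ▸ Subgroup.card_dvd_of_le hEK
    have h7 : (7 : ℕ) ∣ Nat.card K := by
      have := Subgroup.card_dvd_of_le (Subgroup.zpowers_le.mpr hgK)
      rwa [Nat.card_zpowers, hg] at this
    have h56 : (56 : ℕ) ∣ Nat.card K := by
      have hcop : Nat.Coprime 8 7 := by norm_num
      have := Nat.Coprime.mul_dvd_of_dvd_of_dvd hcop h8 h7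
      norm_num at this
      exact this
    have hdvd : Nat.card K ∣ 56 := hG ▸ Subgroup.card_subgroup_dvd_card K
    have hcK : Nat.card K = 56 := Nat.dvd_antisymm hdvd h56
    exact Subgroup.eq_top_of_card_eq K (by rw [hcK, hG])
  have hUinv : ∀ h : G, ∀ w ∈ U, (ρ h : V →ₗ[ℂ] V) w ∈ U := by
    intro h
    have hmem : h ∈ Subgroup.closure ((E : Set G) ∪ {g}) := hKtop ▸ Subgroup.mem_top h
    have key : (∀ w ∈ U, (ρ h : V →ₗ[ℂ] V) w ∈ U) ∧ (∀ w ∈ U, (ρ h⁻¹ : V →ₗ[ℂ] V) w ∈ U) := by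
      refine Subgroup.closure_induction
        (p := fun h _ => (∀ w ∈ U, (ρ h : V →ₗ[ℂ] V) w ∈ U) ∧
          (∀ w ∈ U, (ρ h⁻¹ : V →ₗ[ℂ] V) w ∈ U)) ?_ ?_ ?_ ?_ hmem
      · rintro x (hxE | hxg)
        · constructor
          · apply hmapgen
            intro i
            rw [heig i ⟨x, hxE⟩]
            exact Submodule.smul_mem U _ (hvvU i)
          · apply hmapgen
            intro i
            have hxE' : x⁻¹ ∈ E := inv_mem hxE
            have : (ρ x⁻¹ : V →ₗ[ℂ] V) (vv i) = cc i ⟨x⁻¹, hxE'⟩ • vv i := heig i ⟨x⁻¹, hxE'⟩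
            rw [this]
            exact Submodule.smul_mem U _ (hvvU i)
        · rw [Set.mem_singleton_iff] at hxg
          constructor
          · apply hmapgen
            intro i
            rw [hxg, hgshift i]
            exact hvvU _
          · apply hmapgen
            intro i
            have hginv : x⁻¹ = g ^ (6 : ℕ) := by
              rw [hxg]
              apply inv_eq_of_mul_eq_one_right
              calc g * g ^ (6 : ℕ) = g ^ (7 : ℕ) := by group
              _ = 1 := hg7
            rw [hginv, hshift 6 i]
            exact hvvU _
      · refine ⟨?_, ?_⟩ <;>
          (intro w hw; simpa using hw)
      · rintro x y _ _ ⟨hx1, hx2⟩ ⟨hy1, hy2⟩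
        constructor
        · intro w hw
          rw [← hcomp]
          exact hx1 _ (hy1 w hw)
        · intro w hw
          rw [mul_inv_rev, ← hcomp]
          exact hy2 _ (hx2 w hw)
      · rintro x _ ⟨hx1, hx2⟩
        exact ⟨hx2, by simpa using hx1⟩
    exact key.1
  have hUtop : U = ⊤ := by
    rcases hirr U hUinv with hbot | htop
    · exfalso
      apply hvvne 0
      have := hvvU 0
      rw [hbot, Submodule.mem_bot] at this
      exact this
    · exact htop
  refine ⟨Module.Basis.mk hli (by rw [← hU, hUtop]), ?_⟩
  intro i
  rw [Module.Basis.mk_apply, Module.Basis.mk_apply]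
  exact hgshift i


theorem frobenius_2_3_7_faithful_irreducible_rep
    (G : Type) [Group G] [Finite G] (hG : Nat.card G = 56)
    (E : Subgroup G) [E.Normal]
    (hE_card : Nat.card E = 8)
    (hE_sq : ∀ x ∈ E, x ^ 2 = 1)
    (hE_ab : ∀ x ∈ E, ∀ y ∈ E, x * y = y * x)
    (hfree : ∃ g : G, orderOf g = 7 ∧ ∀ x ∈ E, x ≠ 1 → g * x * g⁻¹ ≠ x)
    (V : Type) [AddCommGroup V] [Module ℂ V] [FiniteDimensional ℂ V]
    (hV : Nontrivial V)
    (ρ : G →* (V →ₗ[ℂ] V)ˣ)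
    (hρ : Function.Injective ρ)
    (hirr : ∀ W : Submodule ℂ V, (∀ g : G, ∀ v ∈ W, (ρ g : V →ₗ[ℂ] V) v ∈ W) →
      W = ⊥ ∨ W = ⊤) :
    Module.finrank ℂ V = 7 ∧
    (∀ H : Subgroup G, Nat.card H = 7 →
      ∃ (φ : H ≃* Multiplicative (ZMod 7)) (e : V ≃ₗ[ℂ] (ZMod 7 → ℂ)),
        ∀ (x : H) (v : V) (i : ZMod 7),
          e ((ρ (x : G) : V →ₗ[ℂ] V) v) i = e v (i - Multiplicative.toAdd (φ x))) ∧
    ∀ g : G, orderOf g = 7 → ∃ v : V, v ≠ 0 ∧ (ρ g : V →ₗ[ℂ] V) v = v := by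
  classical
  have hcomp : ∀ (h₁ h₂ : G) (w : V),
      (ρ h₁ : V →ₗ[ℂ] V) ((ρ h₂ : V →ₗ[ℂ] V) w) = (ρ (h₁ * h₂) : V →ₗ[ℂ] V) w := by
    intro h₁ h₂ w
    rw [map_mul, Units.val_mul]
    rfl
  have hfreeall := free_all G hG E hfree
  obtain ⟨g₀, hg₀, -⟩ := hfree
  obtain ⟨b₀, hb₀⟩ := main_basis G hG E hE_card hE_sq hE_ab V hV ρ hρ hirr g₀ hg₀ hfreeall
  refine ⟨?_, ?_, ?_⟩
  · rw [Module.finrank_eq_card_basis b₀, ZMod.card]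
  · -- restriction to subgroups of order 7
    intro H hH
    haveI : Fact (Nat.Prime 7) := ⟨by norm_num⟩
    haveI : Fintype H := Fintype.ofFinite _
    have hcard : Fintype.card H = 7 := by rw [← Nat.card_eq_fintype_card, hH]
    obtain ⟨h, hh⟩ := exists_prime_orderOf_dvd_card (G := H) 7 (by rw [hcard])
    have hcoe : orderOf (h : G) = 7 := by
      have := orderOf_injective H.subtype (Subgroup.subtype_injective H) h
      rw [← this] at hh
      exact hh
    obtain ⟨b, hb⟩ := main_basis G hG E hE_card hE_sq hE_ab V hV ρ hρ hirr
      (h : G) hcoe hfreeall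
    have hpowb : ∀ (k : ℕ) (i : ZMod 7),
        (ρ ((h : G) ^ k) : V →ₗ[ℂ] V) (b i) = b (i + (k : ZMod 7)) := by
      intro k
      induction k with
      | zero => intro i; simp
      | succ n ih =>
        intro i
        calc (ρ ((h : G) ^ (n + 1)) : V →ₗ[ℂ] V) (b i)
            = (ρ ((h : G) ^ n) : V →ₗ[ℂ] V) ((ρ (h : G) : V →ₗ[ℂ] V) (b i)) := by
              rw [hcomp, ← pow_succ]
          _ = (ρ ((h : G) ^ n) : V →ₗ[ℂ] V) (b (i + 1)) := by rw [hb i]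
          _ = b (i + 1 + (n : ZMod 7)) := ih (i + 1)
          _ = b (i + ((n + 1 : ℕ) : ZMod 7)) := by
              congr 1
              push_cast
              ring
    have hpowH : ∀ a b : ℕ, a ≡ b [MOD 7] → h ^ a = h ^ b := by
      intro a b hab
      rw [pow_eq_pow_iff_modEq, hh]
      exact hab
    set ψ : Multiplicative (ZMod 7) →* H := MonoidHom.mk'
      (fun k => h ^ (Multiplicative.toAdd k).val) (by
        intro a b
        show h ^ (Multiplicative.toAdd (a * b)).val
            = h ^ (Multiplicative.toAdd a).val * h ^ (Multiplicative.toAdd b).val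
        rw [← pow_add]
        apply hpowH
        have : Multiplicative.toAdd (a * b)
            = Multiplicative.toAdd a + Multiplicative.toAdd b := rfl
        rw [this, ZMod.val_add]
        unfold Nat.ModEq
        omega) with hψ
    have hψinj : Function.Injective ψ := by
      intro a b hab
      have hab' : h ^ (Multiplicative.toAdd a).val = h ^ (Multiplicative.toAdd b).val := hab
      rw [pow_eq_pow_iff_modEq, hh] at hab'
      have h1 : (Multiplicative.toAdd a).val < 7 := ZMod.val_lt _
      have h2 : (Multiplicative.toAdd b).val < 7 := ZMod.val_lt _
      have h3 : (Multiplicative.toAdd a).val = (Multiplicative.toAdd b).val := by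
        unfold Nat.ModEq at hab'
        omega
      have h4 : Multiplicative.toAdd a = Multiplicative.toAdd b := ZMod.val_injective 7 h3
      exact Multiplicative.toAdd.injective h4
    have hψbij : Function.Bijective ψ := by
      rw [Nat.bijective_iff_injective_and_card]
      refine ⟨hψinj, ?_⟩
      rw [hH]
      simp [Nat.card_eq_fintype_card]
    set φeq : Multiplicative (ZMod 7) ≃* H := MulEquiv.ofBijective ψ hψbij with hφeq
    refine ⟨φeq.symm, b.equivFun, ?_⟩
    intro x w i
    set k : ZMod 7 := Multiplicative.toAdd (φeq.symm x) with hk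
    have hx : (x : H) = h ^ k.val := by
      conv_lhs => rw [← φeq.apply_symm_apply x]
      rfl
    have hcast : ((k.val : ℕ) : ZMod 7) = k := by
      rw [ZMod.natCast_val, ZMod.cast_id]
    have hmain : ∀ j : ZMod 7,
        b.equivFun ((ρ ((x : H) : G) : V →ₗ[ℂ] V) (b j)) i = b.equivFun (b j) (i - k) := by
      intro j
      have : ((x : H) : G) = (h : G) ^ k.val := by rw [hx]; rfl
      rw [this, hpowb k.val j, hcast, Module.Basis.equivFun_self, Module.Basis.equivFun_self]
      by_cases hji : j + k = i
      · rw [if_pos hji, if_pos (by rw [← hji]; ring)]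
      · rw [if_neg hji, if_neg (by intro hc; exact hji (by rw [hc]; ring))]
    -- extend to all w by linearity
    have L1 : V →ₗ[ℂ] ℂ := (LinearMap.proj i).comp
      ((b.equivFun : V ≃ₗ[ℂ] (ZMod 7 → ℂ)).toLinearMap.comp (ρ ((x : H) : G) : V →ₗ[ℂ] V))
    have heqL : (LinearMap.proj i).comp
        ((b.equivFun : V ≃ₗ[ℂ] (ZMod 7 → ℂ)).toLinearMap.comp (ρ ((x : H) : G) : V →ₗ[ℂ] V))
        = (LinearMap.proj (i - k)).comp
          (b.equivFun : V ≃ₗ[ℂ] (ZMod 7 → ℂ)).toLinearMap := by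
      apply Module.Basis.ext b
      intro j
      exact hmain j
    have := congrArg (fun (f : V →ₗ[ℂ] ℂ) => f w) heqL
    exact this
  · -- fixed vectors for order 7 elements
    intro g hg
    obtain ⟨b, hb⟩ := main_basis G hG E hE_card hE_sq hE_ab V hV ρ hρ hirr g hg hfreeall
    refine ⟨∑ i : ZMod 7, b i, ?_, ?_⟩
    · intro hzero
      have hli := b.linearIndependent
      rw [Fintype.linearIndependent_iff] at hli
      have := hli (fun _ => 1) (by simpa using hzero) 0
      exact one_ne_zero this
    · rw [map_sum]
      have h1 : ∀ i : ZMod 7, (ρ g : V →ₗ[ℂ] V) (b i) = b (i + 1) := hb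
      rw [Finset.sum_congr rfl (fun i _ => h1 i)]
      exact Fintype.sum_equiv (Equiv.addRight (1 : ZMod 7)) _ _ (fun i => rfl)
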